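/- Let p be a positive integer and let a, b be positive real numbers. Then the polynomial f(r) = r^p − a·r^(p−1) − b has exactly one positive real root r₁, and this root satisfies a ≤ r₁ ≤ a + b^(1/p). -/
import Mathlib


/-- For a positive integer `p` and positive reals `a`, `b`, the polynomial
`f(r) = r^p - a*r^(p-1) - b` has exactly one positive real root `r₁`,
and it satisfies `a ≤ r₁ ≤ a + b^(1/p)`. -/
theorem stmt0 (p : ℕ) (hp : 0 < p) (a b : ℝ) (ha : 0 < a) (hb : 0 < b) :
    ∃ r₁ : ℝ, (0 < r₁ ∧ r₁ ^ p - a * r₁ ^ (p - 1) - b = 0) ∧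
      (∀ r : ℝ, 0 < r → r ^ p - a * r ^ (p - 1) - b = 0 → r = r₁) ∧
      a ≤ r₁ ∧ r₁ ≤ a + b ^ (1 / (p : ℝ)) := by
  set c := b ^ (1 / (p : ℝ)) with hc
  have hc0 : 0 < c := Real.rpow_pos_of_pos hb _
  have hpne : (p : ℝ) ≠ 0 := by exact_mod_cast hp.ne'
  have hcp : c ^ p = b := by
    rw [hc, ← Real.rpow_natCast (b ^ (1 / (p : ℝ))) p, ← Real.rpow_mul hb.le,
      one_div_mul_cancel hpne, Real.rpow_one]
  have key : ∀ r : ℝ, r ^ p - a * r ^ (p - 1) = r ^ (p - 1) * (r - a) := by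
    intro r
    have hr : r ^ p = r ^ (p - 1) * r := by
      rw [← pow_succ]; congr 1; omega
    rw [hr]; ring
  have cont : ContinuousOn (fun r : ℝ => r ^ p - a * r ^ (p - 1) - b)
      (Set.Icc a (a + c)) := by fun_prop
  have hfa : (fun r : ℝ => r ^ p - a * r ^ (p - 1) - b) a = -b := by
    simp [key a]
  have hcc : c ^ (p - 1) * c = b := by
    rw [← pow_succ, show p - 1 + 1 = p from by omega, hcp]
  have hfb : 0 ≤ (fun r : ℝ => r ^ p - a * r ^ (p - 1) - b) (a + c) := by
    simp only [key]
    have h2 : c ^ (p - 1) * c ≤ (a + c) ^ (p - 1) * (a + c - a) := by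
      have he : a + c - a = c := by ring
      rw [he]
      gcongr <;> linarith
    linarith
  have hle : a ≤ a + c := by linarith
  have h0mem : (0 : ℝ) ∈ Set.Icc ((fun r : ℝ => r ^ p - a * r ^ (p - 1) - b) a)
      ((fun r : ℝ => r ^ p - a * r ^ (p - 1) - b) (a + c)) := by
    rw [hfa]; constructor <;> [linarith; exact hfb]
  obtain ⟨r₁, hr₁mem, hr₁⟩ := intermediate_value_Icc hle cont h0mem
  have hr₁a : a < r₁ := by
    rcases lt_or_eq_of_le hr₁mem.1 with h | h
    · exact h
    · exfalso; rw [← h] at hr₁; simp only at hr₁; rw [key] at hr₁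
      simp at hr₁; linarith
  -- any positive root is > a and equals r₁
  have root_gt : ∀ r : ℝ, 0 < r → r ^ p - a * r ^ (p - 1) - b = 0 → a < r := by
    intro r hr hroot
    rw [key] at hroot
    by_contra h
    push_neg at h
    have h1 : r ^ (p - 1) * (r - a) ≤ 0 :=
      mul_nonpos_of_nonneg_of_nonpos (pow_nonneg hr.le _) (by linarith)
    linarith
  have uniq : ∀ r s : ℝ, a < r → a < s →
      r ^ (p-1) * (r - a) = s ^ (p-1) * (s - a) → r = s := by
    intro r s hr hs hrs
    by_contra hne
    rcases lt_or_gt_of_ne hne with h | h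
    · have : r ^ (p-1) * (r - a) < s ^ (p-1) * (s - a) := by
        apply mul_lt_mul' (by gcongr; linarith) (by linarith) (by linarith)
        exact pow_pos (by linarith) _
      linarith
    · have : s ^ (p-1) * (s - a) < r ^ (p-1) * (r - a) := by
        apply mul_lt_mul' (by gcongr; linarith) (by linarith) (by linarith)
        exact pow_pos (by linarith) _
      linarith
  simp only at hr₁
  refine ⟨r₁, ⟨lt_trans ha hr₁a, hr₁⟩, ?_, hr₁mem.1, hr₁mem.2⟩
  intro r hr hroot
  apply uniq r r₁ (root_gt r hr hroot) hr₁a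
  have h1 : r ^ (p-1) * (r - a) = b := by rw [← key]; linarith
  have h2 : r₁ ^ (p-1) * (r₁ - a) = b := by rw [← key]; linarith
  rw [h1, h2]
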